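/- (Real double commutant theorem) Let H be a real Hilbert space and A a unital *-subalgebra of B(H). Then the following are equivalent: (a) A = A''; (b) A is weakly closed; (c) A is strongly closed. Moreover for any unital *-subalgebra B of B(H), B'' equals the weak closure and the strong closure of B. -/

import Mathlib

set_option maxHeartbeats 1000000
set_option synthInstance.maxHeartbeats 400000
set_option linter.unusedSectionVars false

variable {H : Type*}

/-- The commutant of a set of bounded operators. -/
def commutantS [NormedAddCommGroup H] [InnerProductSpace ℝ H]
    (S : Set (H →L[ℝ] H)) : Set (H →L[ℝ] H) :=
  {T | ∀ A ∈ S, T * A = A * T}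

/-- The closure of a set of bounded operators in the strong operator topology
(pointwise convergence). -/
def sotClosure [NormedAddCommGroup H] [InnerProductSpace ℝ H]
    (S : Set (H →L[ℝ] H)) : Set (H →L[ℝ] H) :=
  {T | (⇑T : H → H) ∈ closure ((fun A : H →L[ℝ] H => (⇑A : H → H)) '' S)}

/-- The closure of a set of bounded operators in the weak operator topology. -/
def wotClosure [NormedAddCommGroup H] [InnerProductSpace ℝ H]
    (S : Set (H →L[ℝ] H)) : Set (H →L[ℝ] H) :=
  {T | (fun p : H × H => @inner ℝ H _ p.1 (T p.2)) ∈
    closure ((fun (A : H →L[ℝ] H) (p : H × H) => @inner ℝ H _ p.1 (A p.2)) '' S)}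

section Aux

variable [NormedAddCommGroup H] [InnerProductSpace ℝ H] [CompleteSpace H]

open ContinuousLinearMap

/-- An operator commuting with a closed submodule's projection setup: if `S` and its adjoint
preserve a complete submodule `U`, then `S` commutes with the orthogonal projection onto `U`. -/
theorem comm_orthogonalProjection {E : Type*} [NormedAddCommGroup E] [InnerProductSpace ℝ E]
    [CompleteSpace E] (U : Submodule ℝ E) [CompleteSpace U] (S : E →L[ℝ] E)
    (h1 : ∀ u ∈ U, S u ∈ U) (h2 : ∀ u ∈ U, ContinuousLinearMap.adjoint S u ∈ U) :
    S ∘L (U.subtypeL ∘L Submodule.orthogonalProjection U) = (U.subtypeL ∘L Submodule.orthogonalProjection U) ∘L S := by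
  set P : E →L[ℝ] E := U.subtypeL ∘L Submodule.orthogonalProjection U with hPdef
  have hP : IsSelfAdjoint P := isSelfAdjoint_starProjection U
  have hPmem : ∀ x : E, P x ∈ U := fun x => (Submodule.orthogonalProjection U x).2
  have key : ∀ (R : E →L[ℝ] E), (∀ u ∈ U, R u ∈ U) → P ∘L (R ∘L P) = R ∘L P := by
    intro R hR
    ext x
    have : R (P x) ∈ U := hR _ (hPmem x)
    exact Submodule.starProjection_eq_self_iff.2 this
  have k1 : P ∘L (S ∘L P) = S ∘L P := key S h1
  have k2 : P ∘L (ContinuousLinearMap.adjoint S ∘L P) = ContinuousLinearMap.adjoint S ∘L P :=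
    key _ h2
  clear_value P
  have k3 := congrArg ContinuousLinearMap.adjoint k2
  simp only [adjoint_comp, adjoint_adjoint, hP.adjoint_eq] at k3
  -- k3 : (P ∘L S) ∘L P = P ∘L S
  calc S ∘L P = P ∘L (S ∘L P) := k1.symm
    _ = (P ∘L S) ∘L P := by rw [ContinuousLinearMap.comp_assoc]
    _ = P ∘L S := k3

variable {ι : Type*} [Fintype ι] [DecidableEq ι]

instance piLpCompleteSpace : CompleteSpace (PiLp 2 (fun _ : ι => H)) :=
  inferInstance

/-- The amplification (diagonal action) of an operator on `H` to `ℓ²(ι, H)`. -/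
noncomputable def amp (A : H →L[ℝ] H) :
    PiLp 2 (fun _ : ι => H) →L[ℝ] PiLp 2 (fun _ : ι => H) :=
  ((PiLp.continuousLinearEquiv 2 ℝ (fun _ : ι => H)).symm.toContinuousLinearMap) ∘L
    (ContinuousLinearMap.pi fun i => A ∘L ContinuousLinearMap.proj i) ∘L
    ((PiLp.continuousLinearEquiv 2 ℝ (fun _ : ι => H)).toContinuousLinearMap)

@[simp] theorem amp_apply (A : H →L[ℝ] H) (x : PiLp 2 (fun _ : ι => H)) (i : ι) :
    (amp A x : PiLp 2 (fun _ : ι => H)) i = A (x i) := rfl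

/-- The coordinate inclusion `H →L ℓ²(ι, H)`. -/
noncomputable def cIncl (j : ι) : H →L[ℝ] PiLp 2 (fun _ : ι => H) :=
  ((PiLp.continuousLinearEquiv 2 ℝ (fun _ : ι => H)).symm.toContinuousLinearMap) ∘L
    (ContinuousLinearMap.pi fun i => if i = j then ContinuousLinearMap.id ℝ H else 0)

@[simp] theorem cIncl_apply (j : ι) (v : H) (i : ι) :
    (cIncl j v : PiLp 2 (fun _ : ι => H)) i = if i = j then v else 0 := by
  by_cases h : i = j <;> simp [cIncl, h, ContinuousLinearMap.pi_apply]

noncomputable def cProj (i : ι) : PiLp 2 (fun _ : ι => H) →L[ℝ] H :=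
  (PiLp.proj 2 (fun _ : ι => H) i : PiLp 2 (fun _ : ι => H) →L[ℝ] H)

@[simp] theorem cProj_apply (i : ι) (x : PiLp 2 (fun _ : ι => H)) :
    (cProj i : PiLp 2 (fun _ : ι => H) →L[ℝ] H) x = x i := rfl

theorem decompose (y : PiLp 2 (fun _ : ι => H)) :
    ∑ j, (cIncl j (y j) : PiLp 2 (fun _ : ι => H)) = y := by
  have : ∀ i : ι, (cProj i : PiLp 2 (fun _ : ι => H) →L[ℝ] H)
      (∑ j, (cIncl j (y j) : PiLp 2 (fun _ : ι => H))) = y i := by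
    intro i
    rw [map_sum]
    simp
  ext i
  exact this i

theorem norm_coord_le (x : PiLp 2 (fun _ : ι => H)) (i : ι) : ‖x i‖ ≤ ‖x‖ := by
  have h := PiLp.norm_sq_eq_of_L2 (fun _ : ι => H) x
  have : ‖x i‖ ^ 2 ≤ ‖x‖ ^ 2 := by
    rw [h]
    exact Finset.single_le_sum (fun j _ => sq_nonneg ‖x j‖) (Finset.mem_univ i)
  have h2 := Real.sqrt_le_sqrt this
  rwa [Real.sqrt_sq (norm_nonneg _), Real.sqrt_sq (norm_nonneg _)] at h2

theorem amp_mul (A B : H →L[ℝ] H) :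
    (amp (A * B) : PiLp 2 (fun _ : ι => H) →L[ℝ] _) = amp A ∘L amp B := by
  ext x; rfl

theorem amp_one : (amp (1 : H →L[ℝ] H) : PiLp 2 (fun _ : ι => H) →L[ℝ] _) = 1 := by
  ext x; rfl

theorem amp_add (A B : H →L[ℝ] H) :
    (amp (A + B) : PiLp 2 (fun _ : ι => H) →L[ℝ] _) = amp A + amp B := by
  ext x; rfl

theorem amp_smul (c : ℝ) (A : H →L[ℝ] H) :
    (amp (c • A) : PiLp 2 (fun _ : ι => H) →L[ℝ] _) = c • amp A := by
  ext x; rfl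

theorem amp_adjoint (A : H →L[ℝ] H) :
    (amp (ContinuousLinearMap.adjoint A) : PiLp 2 (fun _ : ι => H) →L[ℝ] _) =
      ContinuousLinearMap.adjoint (amp A) := by
  rw [ContinuousLinearMap.eq_adjoint_iff]
  intro x y
  rw [PiLp.inner_apply, PiLp.inner_apply]
  refine Finset.sum_congr rfl fun i _ => ?_
  simp [ContinuousLinearMap.adjoint_inner_left]

theorem amp_comp_cIncl (A : H →L[ℝ] H) (j : ι) :
    (amp A : PiLp 2 (fun _ : ι => H) →L[ℝ] _) ∘L cIncl j = cIncl j ∘L A := by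
  ext v i
  simp only [ContinuousLinearMap.comp_apply, amp_apply, cIncl_apply]
  split_ifs <;> simp

theorem cProj_comp_amp (A : H →L[ℝ] H) (i : ι) :
    (cProj i : PiLp 2 (fun _ : ι => H) →L[ℝ] H) ∘L amp A = A ∘L cProj i := rfl

end Aux

section Main

variable [NormedAddCommGroup H] [InnerProductSpace ℝ H] [CompleteSpace H]

open ContinuousLinearMap

theorem key_approx {ι : Type*} [Fintype ι] [DecidableEq ι]
    (B : StarSubalgebra ℝ (H →L[ℝ] H)) {T : H →L[ℝ] H}
    (hT : T ∈ commutantS (commutantS (B : Set (H →L[ℝ] H))))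
    (x : PiLp 2 (fun _ : ι => H)) {ε : ℝ} (hε : 0 < ε) :
    ∃ A ∈ B, ‖(amp A x : PiLp 2 (fun _ : ι => H)) - amp T x‖ < ε := by
  classical
  have amp_zero : (amp (0 : H →L[ℝ] H) : PiLp 2 (fun _ : ι => H) →L[ℝ] _) = 0 := by
    ext v i; simp
  let p : Submodule ℝ (PiLp 2 (fun _ : ι => H)) :=
    { carrier := (fun A : H →L[ℝ] H => (amp A x : PiLp 2 (fun _ : ι => H))) ''
        (B : Set (H →L[ℝ] H))
      add_mem' := by
        rintro _ _ ⟨A, hA, rfl⟩ ⟨A', hA', rfl⟩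
        exact ⟨A + A', add_mem hA hA', by simpa using DFunLike.congr_fun (amp_add A A') x⟩
      zero_mem' := ⟨0, zero_mem _, by simpa using DFunLike.congr_fun amp_zero x⟩
      smul_mem' := by
        rintro c _ ⟨A, hA, rfl⟩
        exact ⟨c • A, SMulMemClass.smul_mem c hA,
          by simpa using DFunLike.congr_fun (amp_smul c A) x⟩ }
  have hpmem : ∀ A ∈ B, (amp A x : PiLp 2 (fun _ : ι => H)) ∈ p := fun A hA => ⟨A, hA, rfl⟩
  let M : Submodule ℝ (PiLp 2 (fun _ : ι => H)) := p.topologicalClosure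
  haveI : CompleteSpace M := (p.isClosed_topologicalClosure).completeSpace_coe
  let P : PiLp 2 (fun _ : ι => H) →L[ℝ] PiLp 2 (fun _ : ι => H) :=
    M.subtypeL ∘L Submodule.orthogonalProjection M
  have hInvar : ∀ A ∈ B, ∀ u ∈ M, (amp A u : PiLp 2 (fun _ : ι => H)) ∈ M := by
    intro A hA u hu
    have hmaps : Set.MapsTo (amp A) (p : Set (PiLp 2 (fun _ : ι => H)))
        (p : Set (PiLp 2 (fun _ : ι => H))) := by
      rintro _ ⟨A', hA', rfl⟩
      exact ⟨A * A', mul_mem hA hA', by simpa using DFunLike.congr_fun (amp_mul A A') x⟩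
    have hu' : u ∈ closure (p : Set (PiLp 2 (fun _ : ι => H))) := by
      rwa [← Submodule.topologicalClosure_coe]
    have h1 := (hmaps.closure (amp A).continuous) hu'
    have h2 : (amp A u : PiLp 2 (fun _ : ι => H)) ∈
        (p.topologicalClosure : Set (PiLp 2 (fun _ : ι => H))) := by
      rw [Submodule.topologicalClosure_coe]; exact h1
    exact h2
  have hPcomm : ∀ A ∈ B, (amp A : PiLp 2 (fun _ : ι => H) →L[ℝ] _) ∘L P = P ∘L amp A := by
    intro A hA
    refine comm_orthogonalProjection M (amp A) (hInvar A hA) ?_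
    intro u hu
    rw [← amp_adjoint]
    exact hInvar _ (by simpa [ContinuousLinearMap.star_eq_adjoint] using star_mem hA) u hu
  have hS : ∀ i j : ι,
      ((cProj i : PiLp 2 (fun _ : ι => H) →L[ℝ] H) ∘L P ∘L cIncl j) ∈
        commutantS (B : Set (H →L[ℝ] H)) := by
    intro i j A hA
    ext v
    show (cProj i : PiLp 2 (fun _ : ι => H) →L[ℝ] H) (P (cIncl j (A v))) =
      A ((cProj i : PiLp 2 (fun _ : ι => H) →L[ℝ] H) (P (cIncl j v)))
    have e1 : (cIncl j (A v) : PiLp 2 (fun _ : ι => H)) = amp A (cIncl j v) :=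
      (DFunLike.congr_fun (amp_comp_cIncl A j) v).symm
    have e2 : (P (amp A (cIncl j v)) : PiLp 2 (fun _ : ι => H)) = amp A (P (cIncl j v)) :=
      (DFunLike.congr_fun (hPcomm A hA) (cIncl j v)).symm
    rw [e1, e2]
    rfl
  have hTmP : (amp T : PiLp 2 (fun _ : ι => H) →L[ℝ] _) ∘L P = P ∘L amp T := by
    ext y i
    show T ((P y : PiLp 2 (fun _ : ι => H)) i) = (P (amp T y) : PiLp 2 (fun _ : ι => H)) i
    have hdy : (amp T y : PiLp 2 (fun _ : ι => H)) =
        ∑ j, (cIncl j (T (y j)) : PiLp 2 (fun _ : ι => H)) := by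
      conv_lhs => rw [← decompose (amp T y)]
      exact Finset.sum_congr rfl fun j _ => rfl
    have step1 : (P (amp T y) : PiLp 2 (fun _ : ι => H)) i =
        ∑ j, ((cProj i : PiLp 2 (fun _ : ι => H) →L[ℝ] H) ∘L P ∘L cIncl j) (T (y j)) := by
      rw [hdy, map_sum]
      rw [show ((∑ j, (P (cIncl j (T (y j))) : PiLp 2 (fun _ : ι => H))) i) =
        (cProj i : PiLp 2 (fun _ : ι => H) →L[ℝ] H)
          (∑ j, (P (cIncl j (T (y j))) : PiLp 2 (fun _ : ι => H))) from rfl, map_sum]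
      rfl
    have step2 : ∀ j, ((cProj i : PiLp 2 (fun _ : ι => H) →L[ℝ] H) ∘L P ∘L cIncl j) (T (y j)) =
        T (((cProj i : PiLp 2 (fun _ : ι => H) →L[ℝ] H) ∘L P ∘L cIncl j) (y j)) := by
      intro j
      have := hT _ (hS i j)
      exact (DFunLike.congr_fun this (y j)).symm
    have step3 : ∑ j, ((cProj i : PiLp 2 (fun _ : ι => H) →L[ℝ] H) ∘L P ∘L cIncl j) (y j) =
        (P y : PiLp 2 (fun _ : ι => H)) i := by
      have h0 : (P y : PiLp 2 (fun _ : ι => H)) i =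
          (cProj i : PiLp 2 (fun _ : ι => H) →L[ℝ] H)
            (P (∑ j, (cIncl j (y j) : PiLp 2 (fun _ : ι => H)))) := by
        rw [decompose]; rfl
      rw [h0, map_sum]
      rw [show ((cProj i : PiLp 2 (fun _ : ι => H) →L[ℝ] H)
          (∑ j, (P (cIncl j (y j)) : PiLp 2 (fun _ : ι => H)))) =
        ∑ j, (cProj i : PiLp 2 (fun _ : ι => H) →L[ℝ] H)
          (P (cIncl j (y j))) from map_sum _ _ _]
      rfl
    rw [step1]
    simp_rw [step2]
    rw [← map_sum, step3]
  have hxM : x ∈ M := p.le_topologicalClosure (by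
    have h1 : (amp (1 : H →L[ℝ] H) x : PiLp 2 (fun _ : ι => H)) = x := by rw [amp_one]; rfl
    exact h1 ▸ hpmem 1 (one_mem B))
  have hPx : P x = x := by
    show (M.subtypeL (Submodule.orthogonalProjection M x) : PiLp 2 (fun _ : ι => H)) = x
    exact Submodule.starProjection_eq_self_iff.2 hxM
  have hTxM : (amp T x : PiLp 2 (fun _ : ι => H)) ∈
      closure (p : Set (PiLp 2 (fun _ : ι => H))) := by
    have h1 : (amp T x : PiLp 2 (fun _ : ι => H)) = P (amp T x) := by
      conv_lhs => rw [← hPx]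
      exact DFunLike.congr_fun hTmP x
    rw [← Submodule.topologicalClosure_coe]
    rw [h1]
    exact (Submodule.orthogonalProjection M (amp T x)).2
  obtain ⟨b, hb, hdist⟩ := Metric.mem_closure_iff.1 hTxM ε hε
  obtain ⟨A, hA, rfl⟩ := hb
  refine ⟨A, hA, ?_⟩
  rw [← dist_eq_norm, dist_comm]
  exact hdist

end Main

section Main2

variable [NormedAddCommGroup H] [InnerProductSpace ℝ H] [CompleteSpace H]

open ContinuousLinearMap

theorem self_subset_sot (S : Set (H →L[ℝ] H)) : S ⊆ sotClosure S := fun T hT =>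
  subset_closure (Set.mem_image_of_mem _ hT)

theorem sot_subset_wot (S : Set (H →L[ℝ] H)) : sotClosure S ⊆ wotClosure S := by
  intro T hT
  have hΦ : Continuous (fun (g : H → H) (q : H × H) => @inner ℝ H _ q.1 (g q.2)) :=
    continuous_pi fun q => Continuous.inner continuous_const (continuous_apply q.2)
  have h2 : (fun q : H × H => @inner ℝ H _ q.1 (T q.2)) ∈
      (fun (g : H → H) (q : H × H) => @inner ℝ H _ q.1 (g q.2)) ''
        closure ((fun A : H →L[ℝ] H => (⇑A : H → H)) '' S) :=
    ⟨⇑T, hT, rfl⟩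
  have h3 := image_closure_subset_closure_image hΦ h2
  rw [Set.image_image] at h3
  exact h3

theorem wot_subset_cc (B : StarSubalgebra ℝ (H →L[ℝ] H)) :
    wotClosure (B : Set (H →L[ℝ] H)) ⊆ commutantS (commutantS (B : Set (H →L[ℝ] H))) := by
  intro T hT C hC
  ext yy
  refine ext_inner_left ℝ fun xx => ?_
  show @inner ℝ H _ xx (T (C yy)) = @inner ℝ H _ xx (C (T yy))
  have hclosed : IsClosed {f : H × H → ℝ |
      f (ContinuousLinearMap.adjoint C xx, yy) = f (xx, C yy)} :=
    isClosed_eq (continuous_apply _) (continuous_apply _)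
  have hsubF : (fun (A : H →L[ℝ] H) (q : H × H) => @inner ℝ H _ q.1 (A q.2)) ''
      (B : Set (H →L[ℝ] H)) ⊆ {f : H × H → ℝ |
        f (ContinuousLinearMap.adjoint C xx, yy) = f (xx, C yy)} := by
    rintro _ ⟨A, hA, rfl⟩
    show @inner ℝ H _ (ContinuousLinearMap.adjoint C xx) (A yy) = @inner ℝ H _ xx (A (C yy))
    rw [ContinuousLinearMap.adjoint_inner_left]
    have h1 : C (A yy) = A (C yy) := DFunLike.congr_fun (hC A hA) yy
    rw [h1]
  have hTF := (IsClosed.closure_subset_iff hclosed).2 hsubF hT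
  have hTF' : @inner ℝ H _ (ContinuousLinearMap.adjoint C xx) (T yy) =
      @inner ℝ H _ xx (T (C yy)) := hTF
  rw [← hTF', ContinuousLinearMap.adjoint_inner_left]

theorem cc_subset_sot (B : StarSubalgebra ℝ (H →L[ℝ] H)) :
    commutantS (commutantS (B : Set (H →L[ℝ] H))) ⊆ sotClosure (B : Set (H →L[ℝ] H)) := by
  classical
  intro T hT
  rw [sotClosure, Set.mem_setOf_eq, mem_closure_iff]
  intro o ho hTo
  obtain ⟨I, u, hu, hsub⟩ := isOpen_pi_iff.1 ho _ hTo
  by_cases hI : I.Nonempty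
  · haveI : Nonempty {y // y ∈ I} := ⟨⟨hI.choose, hI.choose_spec⟩⟩
    have hchoice : ∀ a : {y // y ∈ I}, ∃ δ > 0,
        Metric.ball (T (a : H)) δ ⊆ u (a : H) := by
      intro a
      exact Metric.isOpen_iff.1 (hu a.1 a.2).1 _ (hu a.1 a.2).2
    choose δ hδpos hδball using hchoice
    set ε := Finset.univ.inf' Finset.univ_nonempty δ with hε
    have hεpos : 0 < ε := (Finset.lt_inf'_iff _).2 fun a _ => hδpos a
    let x : PiLp 2 (fun _ : {y // y ∈ I} => H) :=
      (WithLp.equiv 2 (∀ _ : {y // y ∈ I}, H)).symm fun a => (a : H)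
    obtain ⟨A, hA, hAx⟩ := key_approx B hT x hεpos
    refine ⟨⇑A, hsub ?_, Set.mem_image_of_mem _ hA⟩
    intro a ha
    have h1 : ‖A a - T a‖ ≤ ‖(amp A x : PiLp 2 (fun _ : {y // y ∈ I} => H)) - amp T x‖ := by
      have h0 := norm_coord_le ((amp A x : PiLp 2 (fun _ : {y // y ∈ I} => H)) - amp T x) ⟨a, ha⟩
      have h0' : ((amp A x : PiLp 2 (fun _ : {y // y ∈ I} => H)) - amp T x) ⟨a, ha⟩
          = A a - T a := rfl
      rwa [h0'] at h0
    apply hδball ⟨a, ha⟩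
    rw [Metric.mem_ball, dist_eq_norm]
    calc ‖A a - T a‖ ≤ ‖(amp A x : PiLp 2 (fun _ : {y // y ∈ I} => H)) - amp T x‖ := h1
      _ < ε := hAx
      _ ≤ δ ⟨a, ha⟩ := Finset.inf'_le _ (Finset.mem_univ _)
  · rw [Finset.not_nonempty_iff_eq_empty] at hI
    refine ⟨⇑(1 : H →L[ℝ] H), hsub ?_, Set.mem_image_of_mem _ (one_mem B)⟩
    intro a ha
    rw [hI] at ha
    simp at ha

theorem main_eq (B : StarSubalgebra ℝ (H →L[ℝ] H)) :
    commutantS (commutantS (B : Set (H →L[ℝ] H))) = wotClosure (B : Set (H →L[ℝ] H)) ∧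
      commutantS (commutantS (B : Set (H →L[ℝ] H))) = sotClosure (B : Set (H →L[ℝ] H)) := by
  have h1 := cc_subset_sot B
  have h2 := sot_subset_wot (B : Set (H →L[ℝ] H))
  have h3 := wot_subset_cc B
  exact ⟨Set.Subset.antisymm (h1.trans h2) h3, Set.Subset.antisymm h1 (h2.trans h3)⟩

end Main2

/-- **Von Neumann's double commutant theorem in a real Hilbert space.**  For a unital
*-subalgebra `A` of `B(H)` the following are equivalent: `A = A''`, `A` is weakly
closed, `A` is strongly closed.  Moreover, for any unital *-subalgebra `B` of `B(H)`,
`B''` equals the weak closure and the strong closure of `B`. -/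
theorem real_double_commutant_theorem [NormedAddCommGroup H] [InnerProductSpace ℝ H]
    [CompleteSpace H] (A : StarSubalgebra ℝ (H →L[ℝ] H)) :
    ((commutantS (commutantS (A : Set (H →L[ℝ] H))) = (A : Set (H →L[ℝ] H)) ↔
        wotClosure (A : Set (H →L[ℝ] H)) = (A : Set (H →L[ℝ] H))) ∧
      (wotClosure (A : Set (H →L[ℝ] H)) = (A : Set (H →L[ℝ] H)) ↔
        sotClosure (A : Set (H →L[ℝ] H)) = (A : Set (H →L[ℝ] H)))) ∧
    ∀ B : StarSubalgebra ℝ (H →L[ℝ] H),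
      commutantS (commutantS (B : Set (H →L[ℝ] H))) = wotClosure (B : Set (H →L[ℝ] H)) ∧
      commutantS (commutantS (B : Set (H →L[ℝ] H))) = sotClosure (B : Set (H →L[ℝ] H)) := by
  obtain ⟨e1, e2⟩ := main_eq A
  refine ⟨⟨?_, ?_⟩, main_eq⟩
  · rw [e1]
  · rw [← e1, e2]
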